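/- arXiv:2004.14904 — 7 statements merged into one kernel-verified Lean document; each statement's English description precedes it below -/
import Mathlib

section
/- For every integer m ≥ 1, there exist rational coefficients b̂_1, ..., b̂_m such that B_{2m+1}(x) = (x - 1/2) Σ_{j=1}^m b̂_j U(x)^j, where U(x) = x(x-1)/2. -/
open Polynomial

/-- Reflection formula for Bernoulli polynomials. -/
lemma bernoulli_comp_one_sub (n : ℕ) :
    (Polynomial.bernoulli n).comp (1 - X) = (-1 : ℚ[X]) ^ n * Polynomial.bernoulli n := by
  induction n with
  | zero => simp
  | succ n ih =>
    set f : ℚ[X] :=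
      (Polynomial.bernoulli (n+1)).comp (1 - X) - (-1 : ℚ[X]) ^ (n+1) * Polynomial.bernoulli (n+1)
      with hf
    have hder : derivative f = 0 := by
      rw [hf, derivative_sub, derivative_comp, derivative_bernoulli_add_one]
      simp only [derivative_mul, derivative_pow, derivative_neg, derivative_one, derivative_sub,
        derivative_X, derivative_bernoulli_add_one, mul_comp, natCast_comp, add_comp, one_comp, ih]
      ring
    have hC : f = C (f.coeff 0) := eq_C_of_derivative_eq_zero hder
    have heval : f.eval 1 = 0 := by
      rw [hf]
      simp only [eval_sub, eval_comp, eval_sub, eval_one, eval_X, sub_self, eval_mul, eval_pow,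
        eval_neg, eval_one, Polynomial.bernoulli_eval_zero, Polynomial.bernoulli_eval_one]
      rw [bernoulli'_eq_bernoulli]
      have hsq : ((-1 : ℚ)) ^ (n+1) * (-1) ^ (n+1) = 1 := by
        rw [← pow_add, show (n+1)+(n+1) = 2*(n+1) by ring, pow_mul]
        norm_num
      linear_combination (-(_root_.bernoulli (n+1))) * hsq
    have h0 : f.coeff 0 = 0 := by
      have := heval
      rw [hC] at this
      simpa using this
    have : f = 0 := by rw [hC, h0, map_zero]
    rw [hf] at this
    exact sub_eq_zero.mp this

lemma faulhaber_aux (m : ℕ) : ∀ p : ℚ[X], (∀ x : ℚ, p.eval (1 - x) = - p.eval x) →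
    p.natDegree ≤ 2 * m + 1 → p.eval 0 = 0 →
    ∃ b : ℕ → ℚ, ∀ x : ℚ,
      p.eval x = (x - 1 / 2) * ∑ j ∈ Finset.Icc 1 m, b j * (x * (x - 1) / 2) ^ j := by
  induction m with
  | zero =>
    intro p hsym hdeg h0
    refine ⟨0, fun x => ?_⟩
    rw [show Finset.Icc 1 0 = (∅ : Finset ℕ) from rfl]
    simp only [Finset.sum_empty, mul_zero]
    have h1 : p.eval 1 = 0 := by
      have := hsym 0
      simp only [sub_zero, h0, neg_zero] at this
      exact this
    have hp := Polynomial.eq_X_add_C_of_natDegree_le_one hdeg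
    rw [hp] at h0 h1 ⊢
    simp only [eval_add, eval_mul, eval_C, eval_X, mul_zero, zero_add, mul_one] at h0 h1 ⊢
    rw [h0] at h1 ⊢
    simp at h1
    simp [h1]
  | succ m ih =>
    intro p hsym hdeg h0
    set c : ℚ := p.coeff (2 * m + 3) * 2 ^ (m + 1) with hc
    set g : ℚ[X] := (X - C (1/2 : ℚ)) * (C (1/2 : ℚ) * (X ^ 2 - X)) ^ (m + 1) with hgdef
    set q : ℚ[X] := p - C c * g with hqdef
    have hX2eq : (X ^ 2 - X : ℚ[X]) = X * (X - C 1) := by rw [C_1]; ring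
    have hmX2 : (X ^ 2 - X : ℚ[X]).Monic := by
      rw [hX2eq]; exact monic_X.mul (monic_X_sub_C 1)
    have hX2deg : (X ^ 2 - X : ℚ[X]).natDegree = 2 := by
      rw [hX2eq, monic_X.natDegree_mul (monic_X_sub_C 1), natDegree_X, natDegree_X_sub_C]
    have hh : ((X - C (1/2 : ℚ)) * (X ^ 2 - X) ^ (m + 1)).Monic :=
      (monic_X_sub_C _).mul (hmX2.pow _)
    have hhdeg : ((X - C (1/2 : ℚ)) * (X ^ 2 - X) ^ (m + 1)).natDegree = 2 * m + 3 := by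
      rw [(monic_X_sub_C _).natDegree_mul (hmX2.pow _), natDegree_X_sub_C,
        hmX2.natDegree_pow, hX2deg]
      ring
    have hg_eq : g = C ((1/2 : ℚ) ^ (m + 1)) * ((X - C (1/2 : ℚ)) * (X ^ 2 - X) ^ (m + 1)) := by
      rw [hgdef, mul_pow, map_pow]; ring
    have hgdeg : g.natDegree ≤ 2 * m + 3 := by
      rw [hg_eq]; exact (natDegree_C_mul_le _ _).trans (le_of_eq hhdeg)
    have hgcoeff : g.coeff (2 * m + 3) = (1/2 : ℚ) ^ (m + 1) := by
      rw [hg_eq, coeff_C_mul, ← hhdeg, hh.coeff_natDegree, mul_one]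
    have hqcoeff : q.coeff (2 * m + 3) = 0 := by
      have h2 : (2 : ℚ) ^ (m + 1) * (1/2) ^ (m + 1) = 1 := by
        rw [← mul_pow]; norm_num
      rw [hqdef, coeff_sub, coeff_C_mul, hgcoeff, hc, mul_assoc, h2, mul_one, sub_self]
    have hqdeg3 : q.natDegree ≤ 2 * m + 3 := by
      refine (natDegree_sub_le _ _).trans (max_le ?_ ((natDegree_C_mul_le _ _).trans hgdeg))
      omega
    have hgsym : ∀ x : ℚ, g.eval (1 - x) = - g.eval x := by
      intro x
      simp only [hgdef, eval_mul, eval_pow, eval_sub, eval_X, eval_C]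
      ring
    have hqsym : ∀ x : ℚ, q.eval (1 - x) = - q.eval x := by
      intro x
      simp only [hqdef, eval_sub, eval_mul, eval_C, hsym x, hgsym x]
      ring
    have hg0 : g.eval 0 = 0 := by
      simp [hgdef]
    have hq0 : q.eval 0 = 0 := by
      simp [hqdef, h0, hg0]
    have hqdeg : q.natDegree ≤ 2 * m + 1 := by
      by_cases hq : q = 0
      · simp [hq]
      · have hne3 : q.natDegree ≠ 2 * m + 3 := by
          intro h
          apply hq
          apply leadingCoeff_eq_zero.mp
          rw [leadingCoeff, h]
          exact hqcoeff
        have hne2 : q.natDegree ≠ 2 * m + 2 := by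
          intro hdeq
          have hcomp : q.comp (1 - X) = -q := by
            apply Polynomial.funext
            intro x
            rw [eval_comp]
            simp only [eval_sub, eval_one, eval_X, eval_neg]
            exact hqsym x
          have h1X : (1 - X : ℚ[X]) = -(X - C 1) := by rw [C_1]; ring
          have h1Xdeg : (1 - X : ℚ[X]).natDegree = 1 := by
            rw [h1X, natDegree_neg, natDegree_X_sub_C]
          have h1Xlc : (1 - X : ℚ[X]).leadingCoeff = -1 := by
            rw [h1X, leadingCoeff_neg, (monic_X_sub_C (1:ℚ)).leadingCoeff]
          have hlc := leadingCoeff_comp (p := q) (q := (1 - X : ℚ[X])) (by rw [h1Xdeg]; norm_num)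
          rw [hcomp, leadingCoeff_neg, h1Xlc, hdeq] at hlc
          have hpow : (-1 : ℚ) ^ (2 * m + 2) = 1 := by
            rw [show 2 * m + 2 = 2 * (m + 1) by ring, pow_mul]; norm_num
          rw [hpow, mul_one] at hlc
          have : q.leadingCoeff = 0 := by linarith
          exact hq (leadingCoeff_eq_zero.mp this)
        omega
    obtain ⟨b, hb⟩ := ih q hqsym hqdeg hq0
    refine ⟨Function.update b (m + 1) c, fun x => ?_⟩
    have hx : p.eval x = q.eval x + c * g.eval x := by
      rw [hqdef]; simp only [eval_sub, eval_mul, eval_C]; ring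
    have hgx : g.eval x = (x - 1/2) * (x * (x - 1) / 2) ^ (m + 1) := by
      simp only [hgdef, eval_mul, eval_pow, eval_sub, eval_X, eval_C]
      ring
    rw [hx, hb x, hgx]
    have hins : Finset.Icc 1 (m + 1) = insert (m + 1) (Finset.Icc 1 m) := by
      ext k; simp only [Finset.mem_Icc, Finset.mem_insert]; omega
    have hsum : ∑ j ∈ Finset.Icc 1 (m + 1), Function.update b (m + 1) c j * (x * (x - 1) / 2) ^ j
        = c * (x * (x - 1) / 2) ^ (m + 1)
          + ∑ j ∈ Finset.Icc 1 m, b j * (x * (x - 1) / 2) ^ j := by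
      rw [hins, Finset.sum_insert (by simp), Function.update_self]
      congr 1
      refine Finset.sum_congr rfl fun j hj => ?_
      rw [Function.update_of_ne (by simp only [Finset.mem_Icc] at hj; omega)]
    rw [hsum]
    ring

theorem bernoulli_odd_faulhaber_form (m : ℕ) (hm : 1 ≤ m) :
    ∃ b : ℕ → ℚ, ∀ x : ℚ,
      (Polynomial.bernoulli (2 * m + 1)).eval x =
        (x - 1 / 2) * ∑ j ∈ Finset.Icc 1 m, b j * (x * (x - 1) / 2) ^ j := by
  apply faulhaber_aux m
  · intro x
    have := congrArg (eval x) (bernoulli_comp_one_sub (2 * m + 1))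
    rw [eval_comp] at this
    simp only [eval_sub, eval_one, eval_X, eval_mul, eval_pow, eval_neg] at this
    rw [this]
    have : (-1 : ℚ) ^ (2 * m + 1) = -1 := Odd.neg_one_pow ⟨m, by ring⟩
    rw [this]
    ring
  · rw [Polynomial.bernoulli]
    apply natDegree_sum_le_of_forall_le
    intro i _
    exact (natDegree_monomial_le _).trans (Nat.sub_le _ _)
  · rw [Polynomial.bernoulli_eval_zero,
      bernoulli_eq_bernoulli'_of_ne_one (by omega),
      bernoulli'_eq_zero_of_odd ⟨m, by ring⟩ (by omega)]
end

section
/- For every integer m ≥ 1 there exists a polynomial F of degree m-1 with rational coefficients such that for all integers n ≥ 1, Σ_{i=1}^n i^{2m} = S_2 · F(S_1), where S_1 = n(n+1)/2 and S_2 = n(n+1)(2n+1)/6. -/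
open Polynomial

lemma fh_eq_zero_of_nat (P : ℚ[X]) (h : ∀ n : ℕ, P.eval (n : ℚ) = 0) : P = 0 :=
  P.eq_zero_of_infinite_isRoot
    ((Set.infinite_range_of_injective (Nat.cast_injective (R := ℚ))).mono
      (by rintro x ⟨n, rfl⟩; exact h n))

lemma fh_coeff_comp_neg (p : ℚ[X]) (k : ℕ) :
    (p.comp (-X)).coeff k = (-1) ^ k * p.coeff k := by
  induction p using Polynomial.induction_on' with
  | add p q hp hq => simp [add_comp, hp, hq, mul_add]
  | monomial n a =>
      have h1 : (monomial n a).comp (-X) = C ((-1) ^ n * a) * X ^ n := by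
        rw [monomial_comp, map_mul, map_pow]
        simp [C_neg]
        ring
      rw [h1, coeff_C_mul, coeff_X_pow, coeff_monomial]
      rcases eq_or_ne k n with rfl | h
      · simp
      · simp [h, Ne.symm h]

lemma fh_bernoulli_natDegree (n : ℕ) : (Polynomial.bernoulli n).natDegree = n := by
  apply natDegree_eq_of_le_of_coeff_ne_zero
  · rw [Polynomial.bernoulli_def]
    apply natDegree_sum_le_of_forall_le
    intro i hi
    exact (natDegree_monomial_le _).trans (by simpa using Nat.lt_succ_iff.1 (Finset.mem_range.1 hi))
  · rw [Polynomial.bernoulli_def, finset_sum_coeff, Finset.sum_eq_single n]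
    · simp
    · intro i hi hne
      rw [coeff_monomial, if_neg hne]
    · simp

theorem faulhaber_even (m : ℕ) (hm : 1 ≤ m) :
    ∃ F : Polynomial ℚ, F.natDegree = m - 1 ∧
      ∀ n : ℕ, 1 ≤ n →
        (∑ i ∈ Finset.Icc 1 n, (i : ℚ) ^ (2 * m)) =
          ((n : ℚ) * (n + 1) * (2 * n + 1) / 6) * F.eval ((n : ℚ) * (n + 1) / 2) := by
  set p : ℕ := 2 * m with hp
  have hpeven : Even p := ⟨m, by omega⟩
  have hpc : ((p : ℚ) + 1) ≠ 0 := by positivity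
  set Q : ℚ[X] := C ((p : ℚ) + 1)⁻¹ * (Polynomial.bernoulli (p + 1)).comp (X + C 1) with hQ
  have hQev : ∀ x : ℚ, Q.eval x =
      ((p : ℚ) + 1)⁻¹ * (Polynomial.bernoulli (p + 1)).eval (x + 1) := by
    intro x; rw [hQ]; simp [eval_comp]
  have hQd : ∀ x : ℚ, Q.eval (x + 1) = Q.eval x + (x + 1) ^ p := by
    intro x
    rw [hQev, hQev]
    rw [show (x + 1 + 1 : ℚ) = 1 + (x + 1) by ring,
      Polynomial.bernoulli_eval_one_add (p + 1) (x + 1)]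
    have : ((p : ℚ) + 1) ≠ 0 := hpc
    push_cast
    field_simp
  have hQ0 : Q.eval 0 = 0 := by
    rw [hQev, zero_add, Polynomial.bernoulli_eval_one,
      bernoulli'_eq_zero_of_odd ⟨m, by omega⟩ (by omega)]
    ring
  have hQm1 : Q.eval (-1) = 0 := by
    have h := hQd (-1)
    rw [show (-1 : ℚ) + 1 = 0 by ring, zero_pow (by omega : p ≠ 0), add_zero, hQ0] at h
    exact h.symm
  have hQsum : ∀ n : ℕ, Q.eval (n : ℚ) = ∑ i ∈ Finset.Icc 1 n, (i : ℚ) ^ p := by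
    intro n
    induction n with
    | zero => simpa using hQ0
    | succ n ih =>
        rw [Finset.sum_Icc_succ_top (by omega), ← ih]
        push_cast
        rw [hQd]
  -- symmetry of Q about -1/2
  have hsym : ∀ x : ℚ, Q.eval (-1 - x) = - Q.eval x := by
    set P : ℚ[X] := Q.comp (C (-1) - X) + Q with hP
    have hPev : ∀ x : ℚ, P.eval x = Q.eval (-1 - x) + Q.eval x := by
      intro x; rw [hP]; simp [eval_comp]
    have hPstep : ∀ x : ℚ, P.eval (x + 1) = P.eval x := by
      intro x
      rw [hPev, hPev]
      have h2 := hQd (-2 - x)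
      rw [show (-2 - x + 1 : ℚ) = -1 - x by ring] at h2
      have hev : ((-1 - x : ℚ)) ^ p = (x + 1) ^ p := by
        rw [show (-1 - x : ℚ) = -(x + 1) by ring]
        exact hpeven.neg_pow _
      rw [hev] at h2
      rw [show (-1 - (x + 1) : ℚ) = -2 - x by ring, hQd x, h2]
      ring
    have hPnat : ∀ n : ℕ, P.eval (n : ℚ) = 0 := by
      intro n
      induction n with
      | zero =>
          rw [Nat.cast_zero, hPev, hQ0, show (-1 - 0 : ℚ) = -1 by ring, hQm1, add_zero]
      | succ n ih =>
          push_cast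
          rw [hPstep]
          exact ih
    have hP0 : P = 0 := fh_eq_zero_of_nat P hPnat
    intro x
    have h := hPev x
    rw [hP0, eval_zero] at h
    linarith
  -- R := Q shifted, an odd polynomial
  set R : ℚ[X] := Q.comp (X - C (1 / 2)) with hR
  have hRev : ∀ y : ℚ, R.eval y = Q.eval (y - 1 / 2) := by
    intro y; rw [hR]; simp [eval_comp]
  have hRodd : ∀ y : ℚ, R.eval (-y) = - R.eval y := by
    intro y
    rw [hRev, hRev, show (-y - 1 / 2 : ℚ) = -1 - (y - 1 / 2) by ring, hsym]
  have hRcoeff : ∀ k, Even k → R.coeff k = 0 := by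
    intro k hk
    have hcomp : R.comp (-X) = -R := by
      apply Polynomial.funext
      intro x
      rw [eval_comp]
      simp [hRodd]
    have h := congrArg (fun q : ℚ[X] => q.coeff k) hcomp
    simp only [fh_coeff_comp_neg, coeff_neg] at h
    rw [hk.neg_one_pow, one_mul] at h
    linarith
  -- degrees
  have hQdeg : Q.natDegree = p + 1 := by
    rw [hQ, natDegree_C_mul (inv_ne_zero hpc), natDegree_comp, fh_bernoulli_natDegree,
      natDegree_X_add_C, mul_one]
  have hRdeg : R.natDegree = p + 1 := by
    rw [hR, natDegree_comp, natDegree_X_sub_C, hQdeg, mul_one]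
  have hRne : R ≠ 0 := by
    intro h
    rw [h, natDegree_zero] at hRdeg
    omega
  -- odd polynomial decomposition
  set E : ℚ[X] := ∑ j ∈ Finset.range (m + 1), C (R.coeff (2 * j + 1)) * X ^ j with hE
  have hXE : X * E.comp (X ^ 2) =
      ∑ j ∈ Finset.range (m + 1), C (R.coeff (2 * j + 1)) * X ^ (2 * j + 1) := by
    rw [hE, sum_comp, Finset.mul_sum]
    apply Finset.sum_congr rfl
    intro j hj
    rw [mul_comp, C_comp, pow_comp, X_comp, ← pow_mul]
    ring
  have hRXE : R = X * E.comp (X ^ 2) := by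
    ext k
    rw [hXE, finset_sum_coeff]
    rcases Nat.even_or_odd k with hk | hk
    · rw [hRcoeff k hk, Finset.sum_eq_zero]
      intro j hj
      obtain ⟨r, hr⟩ := hk
      rw [coeff_C_mul, coeff_X_pow, if_neg (by omega), mul_zero]
    · obtain ⟨j, hj⟩ := hk
      by_cases hjm : j < m + 1
      · rw [Finset.sum_eq_single j]
        · rw [coeff_C_mul, coeff_X_pow, if_pos (by omega), mul_one, hj]
        · intro b hb hbj
          rw [coeff_C_mul, coeff_X_pow, if_neg (by omega), mul_zero]
        · intro hj'
          exact absurd (Finset.mem_range.2 hjm) hj'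
      · rw [coeff_eq_zero_of_natDegree_lt (by rw [hRdeg]; omega), Finset.sum_eq_zero]
        intro b hb
        have hb' := Finset.mem_range.1 hb
        rw [coeff_C_mul, coeff_X_pow, if_neg (by omega), mul_zero]
  have hEcne : E.comp (X ^ 2) ≠ 0 := by
    intro h
    apply hRne
    rw [hRXE, h, mul_zero]
  have hEne : E ≠ 0 := by
    intro h
    apply hEcne
    rw [h, zero_comp]
  have hEdeg : E.natDegree = m := by
    have h1 := hRdeg
    rw [hRXE, natDegree_mul X_ne_zero hEcne, natDegree_X, natDegree_comp,
      natDegree_X_pow] at h1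
    omega
  -- G
  set G : ℚ[X] := E.comp (C 2 * X + C (1 / 4)) with hG
  have hGev : ∀ s : ℚ, G.eval s = E.eval (2 * s + 1 / 4) := by
    intro s; rw [hG]; simp [eval_comp]
  have hGdeg : G.natDegree = m := by
    rw [hG, natDegree_comp, natDegree_linear (two_ne_zero), hEdeg, mul_one]
  have hGne : G ≠ 0 := by
    intro h
    rw [h, natDegree_zero] at hGdeg
    omega
  have hE14 : E.eval (1 / 4) = 0 := by
    have h1 : R.eval (1 / 2) = 0 := by
      rw [hRev, show (1 / 2 - 1 / 2 : ℚ) = 0 by norm_num, hQ0]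
    rw [hRXE] at h1
    simp only [eval_mul, eval_X, eval_comp, eval_pow] at h1
    norm_num at h1
    exact h1
  have hG0 : G.eval 0 = 0 := by
    rw [hGev]
    norm_num [hE14]
  obtain ⟨F₀, hF₀⟩ : (X : ℚ[X]) ∣ G := by
    rw [Polynomial.X_dvd_iff, coeff_zero_eq_eval_zero]
    exact hG0
  have hF₀ne : F₀ ≠ 0 := by
    rintro rfl
    rw [mul_zero] at hF₀
    exact hGne hF₀
  have hF₀deg : F₀.natDegree = m - 1 := by
    have h := hGdeg
    rw [hF₀, natDegree_mul X_ne_zero hF₀ne, natDegree_X] at h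
    omega
  refine ⟨C (3 / 2 : ℚ) * F₀, ?_, ?_⟩
  · rw [natDegree_C_mul (by norm_num : (3 / 2 : ℚ) ≠ 0), hF₀deg]
  · intro n hn
    have h2 : Q.eval (n : ℚ) = R.eval ((n : ℚ) + 1 / 2) := by
      rw [hRev]
      norm_num
    have h3 : R.eval ((n : ℚ) + 1 / 2) =
        ((n : ℚ) + 1 / 2) * G.eval ((n : ℚ) * ((n : ℚ) + 1) / 2) := by
      rw [hRXE]
      simp only [eval_mul, eval_X, eval_comp, eval_pow]
      rw [hGev]
      congr 1
      ring
    rw [← hQsum n, h2, h3, hF₀]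
    simp only [eval_mul, eval_X, eval_C]
    ring
end

section
/- For integers m ≥ 1 and 0 ≤ j ≤ m, the coefficient b̂_j^{(2m)} in the expansion B_{2m}(x) = Σ_{j=0}^m b̂_j^{(2m)} U(x)^j, with U(x) = x(x-1)/2, is given by b̂_j^{(2m)} = 8^j Σ_{k=j}^m 4^{-k} C(2m,2k) C(k,j) B_{2m-2k}(1/2). -/
open Finset Polynomial

lemma tri_choose (n i j : ℕ) (hi : i ≤ n) (hj : j ≤ n) :
    n.choose i * (n - i).choose j = n.choose (n - j) * (n - j).choose i := by
  rw [Nat.choose_symm hj]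
  rcases le_or_gt (i + j) n with h | h
  · have h1 := Nat.choose_mul (n := n) (k := i + j) (s := i) (Nat.le_add_right i j)
    have h2 := Nat.choose_mul (n := n) (k := i + j) (s := j) (Nat.le_add_left j i)
    simp only [Nat.add_sub_cancel_left, Nat.add_sub_cancel] at h1 h2
    have h3 : (i + j).choose i = (i + j).choose j := by
      rw [← Nat.choose_symm (Nat.le_add_left j i), Nat.add_sub_cancel]
    rw [← h1, ← h2, h3]
  · have z1 : (n - i).choose j = 0 := Nat.choose_eq_zero_of_lt (by omega)
    have z2 : (n - j).choose i = 0 := Nat.choose_eq_zero_of_lt (by omega)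
    rw [z1, z2, mul_zero, mul_zero]

lemma bernoulli_trans (n : ℕ) (x y : ℚ) :
    (Polynomial.bernoulli n).eval (y + x) =
    ∑ k ∈ Finset.range (n + 1), (n.choose k : ℚ) * (Polynomial.bernoulli k).eval x *
      y ^ (n - k) := by
  have key : ∀ k, (Polynomial.bernoulli k).eval x
      = ∑ i ∈ Finset.range (k + 1), _root_.bernoulli i * (k.choose i : ℚ) * x ^ (k - i) := by
    intro k
    rw [Polynomial.bernoulli, eval_finset_sum]
    simp [eval_monomial]
  rw [Polynomial.bernoulli, eval_finset_sum]
  simp only [eval_monomial, key]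
  have lhs1 : ∀ i ∈ Finset.range (n+1),
      _root_.bernoulli i * (n.choose i : ℚ) * (y + x) ^ (n - i)
      = ∑ j ∈ Finset.range (n+1),
          _root_.bernoulli i * (n.choose i : ℚ) * (y ^ j * x ^ (n - i - j) * ((n-i).choose j : ℚ)) := by
    intro i hi
    rw [add_pow, Finset.mul_sum]
    rw [Finset.sum_subset (Finset.range_subset_range.2 (by omega : n - i + 1 ≤ n + 1))]
    intro j hj hj'
    simp only [Finset.mem_range, not_lt] at hj hj'
    rw [Nat.choose_eq_zero_of_lt (by omega : n - i < j)]
    push_cast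
    ring
  rw [Finset.sum_congr rfl lhs1]
  have rhs1 : ∀ k ∈ Finset.range (n+1),
      (n.choose k : ℚ) * (∑ i ∈ Finset.range (k+1), _root_.bernoulli i * (k.choose i : ℚ) * x ^ (k - i)) * y ^ (n - k)
      = ∑ i ∈ Finset.range (n+1),
          (n.choose k : ℚ) * (_root_.bernoulli i * (k.choose i : ℚ) * x ^ (k - i)) * y ^ (n - k) := by
    intro k hk
    simp only [Finset.mem_range] at hk
    rw [Finset.mul_sum, Finset.sum_mul]
    rw [Finset.sum_subset (Finset.range_subset_range.2 (by omega : k + 1 ≤ n + 1))]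
    intro i hi hi'
    simp only [Finset.mem_range, not_lt] at hi hi'
    rw [Nat.choose_eq_zero_of_lt (by omega : k < i)]
    push_cast
    ring
  rw [Finset.sum_congr rfl rhs1]
  rw [← Finset.sum_range_reflect (fun k => ∑ i ∈ Finset.range (n+1),
      (n.choose k : ℚ) * (_root_.bernoulli i * (k.choose i : ℚ) * x ^ (k - i)) * y ^ (n - k)) (n+1)]
  rw [Finset.sum_comm]
  refine Finset.sum_congr rfl fun i hi => Finset.sum_congr rfl fun j hj => ?_
  simp only [Finset.mem_range, Nat.add_sub_cancel] at hi hj ⊢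
  have hi' : i ≤ n := by omega
  have hj' : j ≤ n := by omega
  have e2 : n - (n - i) = i := by omega
  have e3 : n - i - j = n - j - i := by omega
  rw [e2, e3]
  have c : ((n.choose j : ℚ)) * ((n-j).choose i : ℚ) = (n.choose (n-i) : ℚ) * ((n-i).choose j : ℚ) := by
    exact_mod_cast congrArg (Nat.cast : ℕ → ℚ) (tri_choose n j i hj' hi')
  linear_combination _root_.bernoulli j * y ^ i * x ^ (n - j - i) * c

lemma sumB (n : ℕ) (x : ℚ) :
    ∑ k ∈ Finset.range (n + 1), ((n+1).choose k : ℚ) * (Polynomial.bernoulli k).eval x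
      = (n + 1) * x ^ n := by
  have := congrArg (Polynomial.eval x) (Polynomial.sum_bernoulli n)
  simp only [Polynomial.eval_finset_sum, Polynomial.eval_smul, smul_eq_mul,
    Polynomial.eval_monomial] at this
  rw [this, mul_comm]

lemma altB (n : ℕ) (x : ℚ) :
    ∑ k ∈ Finset.range (n + 1), ((n+1).choose k : ℚ) * (-1:ℚ) ^ k * (Polynomial.bernoulli k).eval x
      = (n + 1) * (1 - x) ^ n := by
  have h := bernoulli_trans (n+1) x (-1)
  rw [Finset.sum_range_succ] at h
  simp only [Nat.choose_self, Nat.cast_one, Nat.sub_self, pow_zero, one_mul, mul_one] at h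
  have hadd := Polynomial.bernoulli_eval_one_add (n+1) (x - 1)
  have h1 : (1 : ℚ) + (x - 1) = x := by ring
  rw [h1] at hadd
  simp only [Nat.add_sub_cancel] at hadd
  have key : ∑ k ∈ Finset.range (n + 1),
      ((n+1).choose k : ℚ) * (Polynomial.bernoulli k).eval x * (-1:ℚ) ^ (n + 1 - k)
      = -((n+1) * (x-1)^n) := by
    have h2 : (-1 : ℚ) + x = x - 1 := by ring
    rw [h2] at h
    push_cast at hadd
    linarith [h, hadd]
  calc ∑ k ∈ Finset.range (n + 1), ((n+1).choose k : ℚ) * (-1:ℚ)^k * (Polynomial.bernoulli k).eval x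
      = (-1:ℚ)^(n+1) * ∑ k ∈ Finset.range (n + 1),
          ((n+1).choose k : ℚ) * (Polynomial.bernoulli k).eval x * (-1:ℚ) ^ (n + 1 - k) := by
        rw [Finset.mul_sum]
        refine Finset.sum_congr rfl fun k hk => ?_
        simp only [Finset.mem_range] at hk
        have : (-1:ℚ)^(n+1) * (-1:ℚ)^(n+1-k) = (-1:ℚ)^k := by
          rw [← pow_add]
          have e : n + 1 + (n + 1 - k) = 2 * (n + 1 - k) + k := by omega
          rw [e, pow_add, pow_mul]
          norm_num
        rw [← this]; ring
    _ = (n + 1) * (1 - x) ^ n := by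
        rw [key]
        have : ((1:ℚ) - x)^n = (-1:ℚ)^n * (x-1)^n := by
          rw [← neg_pow]; ring_nf
        rw [this, pow_succ]
        ring

lemma odd_half (n : ℕ) (hn : Odd n) : (Polynomial.bernoulli n).eval (1/2 : ℚ) = 0 := by
  induction n using Nat.strong_induction_on with
  | _ n ih =>
  have h1 := sumB n (1/2 : ℚ)
  have h2 := altB n (1/2 : ℚ)
  have h12 : (1 : ℚ) - 1/2 = 1/2 := by norm_num
  rw [h12] at h2
  have h3 : ∑ k ∈ Finset.range (n + 1),
      ((n+1).choose k : ℚ) * (1 - (-1:ℚ)^k) * (Polynomial.bernoulli k).eval (1/2 : ℚ) = 0 := by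
    have := sub_eq_zero.2 (h1.trans h2.symm)
    rw [← Finset.sum_sub_distrib] at this
    rw [← this]
    refine Finset.sum_congr rfl fun k hk => ?_
    ring
  rw [Finset.sum_range_succ] at h3
  have h4 : ∑ k ∈ Finset.range n,
      ((n+1).choose k : ℚ) * (1 - (-1:ℚ)^k) * (Polynomial.bernoulli k).eval (1/2 : ℚ) = 0 := by
    refine Finset.sum_eq_zero fun k hk => ?_
    simp only [Finset.mem_range] at hk
    rcases Nat.even_or_odd k with he | ho
    · rw [he.neg_one_pow]; ring
    · rw [ih k hk ho]; ring
  rw [h4, zero_add] at h3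
  rw [hn.neg_one_pow] at h3
  have h5 : ((n+1).choose n : ℚ) = (n : ℚ) + 1 := by
    rw [Nat.choose_succ_self_right]; push_cast; ring
  rw [h5] at h3
  have hne : ((n:ℚ)+1) ≠ 0 := by positivity
  rcases mul_eq_zero.1 h3 with h | h
  · exfalso
    rcases mul_eq_zero.1 h with h' | h'
    · exact hne h'
    · norm_num at h'
  · exact h

lemma even_split (f : ℕ → ℚ) : ∀ n, ∑ k ∈ Finset.range (2*n), f k
    = ∑ i ∈ Finset.range n, (f (2*i) + f (2*i+1))
  | 0 => by simp
  | n+1 => by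
    rw [show 2*(n+1) = 2*n+1+1 by ring, Finset.sum_range_succ, Finset.sum_range_succ,
      Finset.sum_range_succ, even_split f n]
    ring

theorem bernoulli_even_expansion_coeffs (m : ℕ) (hm : 1 ≤ m) :
    ∀ x : ℚ, (Polynomial.bernoulli (2 * m)).eval x =
      ∑ j ∈ Finset.range (m + 1),
        (8 ^ j * ∑ k ∈ Finset.Icc j m, (1 / 4 ^ k) * ((2 * m).choose (2 * k) : ℚ) *
          (k.choose j : ℚ) * (Polynomial.bernoulli (2 * m - 2 * k)).eval (1 / 2 : ℚ)) *
        (x * (x - 1) / 2) ^ j := by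
  intro x
  set U : ℚ := x * (x - 1) / 2 with hU
  set B : ℕ → ℚ := fun k => (Polynomial.bernoulli k).eval (1/2 : ℚ) with hB
  -- common form
  have common_rhs :
      ∑ j ∈ Finset.range (m + 1),
        (8 ^ j * ∑ k ∈ Finset.Icc j m, (1 / 4 ^ k) * ((2 * m).choose (2 * k) : ℚ) *
          (k.choose j : ℚ) * B (2 * m - 2 * k)) * U ^ j
      = ∑ j ∈ Finset.range (m + 1), ∑ k ∈ Finset.range (m + 1),
          (8:ℚ) ^ j * ((1 / 4 ^ k) * ((2 * m).choose (2 * k) : ℚ) *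
            (k.choose j : ℚ) * B (2 * m - 2 * k)) * U ^ j := by
    refine Finset.sum_congr rfl fun j hj => ?_
    simp only [Finset.mem_range] at hj
    rw [Finset.mul_sum, Finset.sum_mul]
    refine Finset.sum_subset ?_ ?_
    · intro k hk
      simp only [Finset.mem_Icc] at hk
      simp only [Finset.mem_range]
      omega
    · intro k hk hk'
      simp only [Finset.mem_range] at hk
      simp only [Finset.mem_Icc, not_and, not_le] at hk'
      have : k < j := by omega
      rw [Nat.choose_eq_zero_of_lt this]
      push_cast
      ring
  rw [common_rhs]
  -- LHS chain
  have step1 : (Polynomial.bernoulli (2*m)).eval x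
      = ∑ k ∈ Finset.range (2*m+1),
          ((2*m).choose k : ℚ) * B k * (x - 1/2) ^ (2*m - k) := by
    have h := bernoulli_trans (2*m) (1/2) (x - 1/2)
    have e : (x - 1/2) + 1/2 = x := by ring
    rw [e] at h
    exact h
  have step2 : (Polynomial.bernoulli (2*m)).eval x
      = ∑ i ∈ Finset.range (m+1),
          ((2*m).choose (2*i) : ℚ) * B (2*i) * (x - 1/2) ^ (2*m - 2*i) := by
    rw [step1]
    have hz : ((2*m).choose (2*m+1) : ℚ) * B (2*m+1) * (x - 1/2) ^ (2*m - (2*m+1)) = 0 := by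
      rw [Nat.choose_eq_zero_of_lt (by omega)]
      push_cast; ring
    calc ∑ k ∈ Finset.range (2*m+1), ((2*m).choose k : ℚ) * B k * (x - 1/2) ^ (2*m - k)
        = ∑ k ∈ Finset.range (2*m+1+1), ((2*m).choose k : ℚ) * B k * (x - 1/2) ^ (2*m - k) := by
          rw [Finset.sum_range_succ _ (2*m+1), hz, add_zero]
      _ = ∑ k ∈ Finset.range (2*(m+1)), ((2*m).choose k : ℚ) * B k * (x - 1/2) ^ (2*m - k) := by
          rw [show 2*m+1+1 = 2*(m+1) by ring]
      _ = ∑ i ∈ Finset.range (m+1),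
            (((2*m).choose (2*i) : ℚ) * B (2*i) * (x - 1/2) ^ (2*m - 2*i)
             + ((2*m).choose (2*i+1) : ℚ) * B (2*i+1) * (x - 1/2) ^ (2*m - (2*i+1))) :=
          even_split _ (m+1)
      _ = ∑ i ∈ Finset.range (m+1),
            ((2*m).choose (2*i) : ℚ) * B (2*i) * (x - 1/2) ^ (2*m - 2*i) := by
          refine Finset.sum_congr rfl fun i hi => ?_
          have hzz : (Polynomial.bernoulli (2*i+1)).eval (1/2 : ℚ) = 0 :=
            odd_half (2*i+1) ⟨i, by ring⟩
          simp only [hB, hzz]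
          ring
  have step3 : (Polynomial.bernoulli (2*m)).eval x
      = ∑ k ∈ Finset.range (m+1),
          ((2*m).choose (2*k) : ℚ) * B (2*m - 2*k) * (x - 1/2) ^ (2*k) := by
    rw [step2, ← Finset.sum_range_reflect (fun i =>
      ((2*m).choose (2*i) : ℚ) * B (2*i) * (x - 1/2) ^ (2*m - 2*i)) (m+1)]
    refine Finset.sum_congr rfl fun k hk => ?_
    simp only [Finset.mem_range, Nat.add_sub_cancel] at hk ⊢
    have e1 : 2*(m - k) = 2*m - 2*k := by omega
    rw [e1]
    have e2 : 2*m - (2*m - 2*k) = 2*k := by omega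
    rw [e2]
    have e3 : (2*m).choose (2*m - 2*k) = (2*m).choose (2*k) := Nat.choose_symm (by omega)
    rw [e3]
  rw [step3]
  -- expand the square power
  have pow_expand : ∀ k, (x - 1/2 : ℚ)^(2*k)
      = ∑ j ∈ Finset.range (k+1), (1/4:ℚ)^k * (k.choose j : ℚ) * 8^j * U^j := by
    intro k
    have h0 : (x - 1/2 : ℚ)^(2*k) = ((8*U + 1)/4)^k := by
      rw [pow_mul]
      congr 1
      rw [hU]; ring
    rw [h0, div_pow, add_pow, Finset.sum_div]
    refine Finset.sum_congr rfl fun j hj => ?_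
    rw [mul_pow, one_pow, mul_one]
    field_simp
    rw [mul_assoc, ← mul_pow]; norm_num
  calc ∑ k ∈ Finset.range (m+1), ((2*m).choose (2*k) : ℚ) * B (2*m - 2*k) * (x - 1/2) ^ (2*k)
      = ∑ k ∈ Finset.range (m+1), ∑ j ∈ Finset.range (m+1),
          (8:ℚ) ^ j * ((1 / 4 ^ k) * ((2 * m).choose (2 * k) : ℚ) *
            (k.choose j : ℚ) * B (2 * m - 2 * k)) * U ^ j := by
        refine Finset.sum_congr rfl fun k hk => ?_
        simp only [Finset.mem_range] at hk
        rw [pow_expand k, Finset.mul_sum]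
        rw [Finset.sum_subset (Finset.range_subset_range.2 (by omega : k + 1 ≤ m + 1))]
        · refine Finset.sum_congr rfl fun j hj => ?_
          rw [show (1:ℚ)/4^k = (1/4:ℚ)^k by rw [div_pow, one_pow]]
          ring
        · intro j hj hj'
          simp only [Finset.mem_range, not_lt] at hj hj'
          rw [Nat.choose_eq_zero_of_lt (by omega : k < j)]
          push_cast
          ring
    _ = ∑ j ∈ Finset.range (m + 1), ∑ k ∈ Finset.range (m + 1),
          (8:ℚ) ^ j * ((1 / 4 ^ k) * ((2 * m).choose (2 * k) : ℚ) *
            (k.choose j : ℚ) * B (2 * m - 2 * k)) * U ^ j := Finset.sum_comm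
end

section
/- For integers m ≥ 1 and 0 ≤ j ≤ m, the coefficient b̂_j^{(2m+1)} in the expansion B_{2m+1}(x) = (x - 1/2) Σ_{j=0}^m b̂_j^{(2m+1)} U(x)^j, with U(x) = x(x-1)/2, is given by b̂_j^{(2m+1)} = 8^j Σ_{k=j}^m 4^{-k} C(2m+1,2k+1) C(k,j) B_{2m-2k}(1/2). -/
open Finset

lemma bern_add (n : ℕ) (x y : ℚ) :
    (Polynomial.bernoulli n).eval (x + y) =
      ∑ k ∈ Finset.range (n + 1),
        (n.choose k : ℚ) * (Polynomial.bernoulli k).eval x * y ^ (n - k) := by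
  simp only [Polynomial.bernoulli, Polynomial.eval_finset_sum, Polynomial.eval_monomial]
  -- RHS to double sum over i ≤ k ≤ n, then swap
  have hrhs : ∑ k ∈ range (n + 1),
      (n.choose k : ℚ) * (∑ i ∈ range (k + 1),
        _root_.bernoulli i * (k.choose i : ℚ) * x ^ (k - i)) * y ^ (n - k)
      = ∑ i ∈ range (n + 1), ∑ k ∈ Finset.Ico i (n + 1),
        (n.choose k : ℚ) * (_root_.bernoulli i * (k.choose i : ℚ) * x ^ (k - i)) * y ^ (n - k) := by
    simp_rw [Finset.range_eq_Ico]
    rw [Finset.sum_Ico_Ico_comm 0 (n + 1)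
      (fun i k => (n.choose k : ℚ) * (_root_.bernoulli i * (k.choose i : ℚ) * x ^ (k - i)) * y ^ (n - k))]
    refine Finset.sum_congr rfl fun k _ => ?_
    rw [Finset.mul_sum, Finset.sum_mul]
  rw [hrhs]
  refine Finset.sum_congr rfl fun i hi => ?_
  rw [Finset.mem_range] at hi
  have hi' : i ≤ n := Nat.lt_succ_iff.mp hi
  rw [add_pow, Finset.sum_Ico_eq_sum_range]
  have hn : n + 1 - i = n - i + 1 := by omega
  rw [hn, Finset.mul_sum]
  refine Finset.sum_congr rfl fun s hs => ?_
  rw [Finset.mem_range] at hs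
  have hsn : i + s ≤ n := by omega
  have hch : (n.choose (i + s) : ℚ) * ((i + s).choose i : ℚ)
      = (n.choose i : ℚ) * ((n - i).choose s : ℚ) := by
    have := Nat.choose_mul (n := n) (k := i + s) (s := i) (Nat.le_add_right i s)
    exact_mod_cast congrArg (Nat.cast : ℕ → ℚ) (by simpa using this)
  have h1 : i + s - i = s := by omega
  have h2 : n - (i + s) = n - i - s := by omega
  rw [h1, h2]
  linear_combination (-(_root_.bernoulli i * x ^ s * y ^ (n - i - s))) * hch

lemma bern_half_odd (n : ℕ) (hn : Odd n) :
    (Polynomial.bernoulli n).eval (1 / 2 : ℚ) = 0 := by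
  have h1 := bern_add n 0 (1 / 2)
  have h2 := bern_add n 1 (-(1 / 2))
  rw [show (0 : ℚ) + 1 / 2 = 1 / 2 by norm_num] at h1
  rw [show (1 : ℚ) + -(1 / 2) = 1 / 2 by norm_num] at h2
  simp only [Polynomial.bernoulli_eval_zero] at h1
  simp only [Polynomial.bernoulli_eval_one] at h2
  have key : ∑ k ∈ range (n + 1), (n.choose k : ℚ) * bernoulli' k * (-(1 / 2) : ℚ) ^ (n - k)
      = -∑ k ∈ range (n + 1), (n.choose k : ℚ) * _root_.bernoulli k * ((1 / 2) : ℚ) ^ (n - k) := by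
    rw [← Finset.sum_neg_distrib]
    refine Finset.sum_congr rfl fun k hk => ?_
    rw [Finset.mem_range] at hk
    have hpow : (-1 : ℚ) ^ k * (-1 : ℚ) ^ (n - k) = -1 := by
      rw [← pow_add, Nat.add_sub_cancel' (Nat.lt_succ_iff.mp hk)]
      exact hn.neg_one_pow
    rw [bernoulli'_eq_bernoulli, show (-(1 / 2) : ℚ) = (-1) * (1 / 2) from by norm_num, mul_pow]
    linear_combination ((n.choose k : ℚ) * _root_.bernoulli k * ((1 / 2 : ℚ)) ^ (n - k)) * hpow
  rw [key, ← h1] at h2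
  linarith

lemma sum_range_two_mul' (n : ℕ) (f : ℕ → ℚ) :
    ∑ i ∈ range (2 * n), f i = ∑ t ∈ range n, (f (2 * t) + f (2 * t + 1)) := by
  induction n with
  | zero => simp
  | succ n ih =>
    rw [Finset.sum_range_succ, show 2 * (n + 1) = 2 * n + 1 + 1 by ring,
      Finset.sum_range_succ, Finset.sum_range_succ, ih]
    ring

theorem bernoulli_odd_expansion_coeffs (m : ℕ) (hm : 1 ≤ m) :
    ∀ x : ℚ, (Polynomial.bernoulli (2 * m + 1)).eval x =
      (x - 1 / 2) * ∑ j ∈ Finset.range (m + 1),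
        (8 ^ j * ∑ k ∈ Finset.Icc j m, (1 / 4 ^ k) * ((2 * m + 1).choose (2 * k + 1) : ℚ) *
          (k.choose j : ℚ) * (Polynomial.bernoulli (2 * m - 2 * k)).eval (1 / 2 : ℚ)) *
        (x * (x - 1) / 2) ^ j := by
  intro x
  set U : ℚ := x * (x - 1) / 2 with hU
  set y : ℚ := x - 1 / 2 with hy
  have step1 : (Polynomial.bernoulli (2 * m + 1)).eval x
      = ∑ k ∈ range (m + 1), ((2 * m + 1).choose (2 * k + 1) : ℚ)
          * (Polynomial.bernoulli (2 * m - 2 * k)).eval (1 / 2) * y ^ (2 * k + 1) := by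
    have h := bern_add (2 * m + 1) (1 / 2) y
    rw [show (1 / 2 : ℚ) + y = x from by rw [hy]; ring] at h
    rw [h, show 2 * m + 1 + 1 = 2 * (m + 1) from by ring, sum_range_two_mul']
    rw [← Finset.sum_range_reflect (fun k => ((2 * m + 1).choose (2 * k + 1) : ℚ)
      * (Polynomial.bernoulli (2 * m - 2 * k)).eval (1 / 2) * y ^ (2 * k + 1)) (m + 1)]
    refine Finset.sum_congr rfl fun t ht => ?_
    rw [Finset.mem_range] at ht
    have htm : t ≤ m := Nat.lt_succ_iff.mp ht
    rw [bern_half_odd (2 * t + 1) ⟨t, by omega⟩, mul_zero, zero_mul, add_zero]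
    rw [show 2 * (m + 1 - 1 - t) + 1 = 2 * m + 1 - 2 * t from by omega,
      show 2 * m - 2 * (m + 1 - 1 - t) = 2 * t from by omega,
      Nat.choose_symm (show 2 * t ≤ 2 * m + 1 by omega)]
  rw [step1]
  have step2 : ∀ k ∈ range (m + 1), ((2 * m + 1).choose (2 * k + 1) : ℚ)
        * (Polynomial.bernoulli (2 * m - 2 * k)).eval (1 / 2) * y ^ (2 * k + 1)
      = y * ∑ j ∈ range (k + 1),
          (((2 * m + 1).choose (2 * k + 1) : ℚ)
            * (Polynomial.bernoulli (2 * m - 2 * k)).eval (1 / 2)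
            * (8 ^ j * (1 / 4 : ℚ) ^ k * (k.choose j : ℚ))) * U ^ j := by
    intro k _
    have hy2 : y ^ 2 = 2 * U + 1 / 4 := by rw [hy, hU]; ring
    have hexp : y ^ (2 * k + 1) = (2 * U + 1 / 4) ^ k * y := by
      rw [pow_succ, pow_mul, hy2]
    rw [hexp, add_pow]
    simp only [Finset.sum_mul, Finset.mul_sum]
    refine Finset.sum_congr rfl fun j hj => ?_
    rw [Finset.mem_range] at hj
    have hjk : j ≤ k := Nat.lt_succ_iff.mp hj
    have h4 : ((1 : ℚ) / 4) ^ (k - j) = (1 / 4) ^ k * 4 ^ j := by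
      have h5 : ((1 : ℚ) / 4) ^ k = (1 / 4) ^ (k - j) * (1 / 4) ^ j := by
        rw [← pow_add, Nat.sub_add_cancel hjk]
      rw [h5, mul_assoc, ← mul_pow]
      norm_num
    rw [h4, mul_pow, show (8 : ℚ) = 2 * 4 from by norm_num, mul_pow]
    ring
  rw [Finset.sum_congr rfl step2, ← Finset.mul_sum]
  simp_rw [Finset.range_eq_Ico]
  rw [← Finset.sum_Ico_Ico_comm 0 (m + 1) (fun j k =>
    (((2 * m + 1).choose (2 * k + 1) : ℚ)
      * (Polynomial.bernoulli (2 * m - 2 * k)).eval (1 / 2)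
      * (8 ^ j * (1 / 4 : ℚ) ^ k * (k.choose j : ℚ))) * U ^ j)]
  congr 1
  refine Finset.sum_congr (by rw [Nat.Ico_zero_eq_range]) fun j _ => ?_
  rw [Finset.Ico_add_one_right_eq_Icc]
  simp only [Finset.sum_mul, Finset.mul_sum]
  refine Finset.sum_congr rfl fun k _ => ?_
  rw [one_div_pow]
  ring
end

section
/- In the Faulhaber expansions S_{2m} = S_2 Σ_{j=0}^{m-1} b_{m,j} S_1^j and S_{2m+1} = S_1^2 Σ_{j=0}^{m-1} c_{m,j} S_1^j (valid for all n ≥ 1, with S_k = Σ_{i=1}^n i^k), the coefficients satisfy c_{m,j} = ((4m+2)/(3j+6)) · b_{m,j} for all 0 ≤ j ≤ m-1 and m ≥ 1. -/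
open Polynomial Finset

namespace FaulhaberAux

lemma poly_ext {p q : ℚ[X]} (h : ∀ n : ℕ, 1 ≤ n → p.eval (n : ℚ) = q.eval (n : ℚ)) :
    p = q := by
  have hz : p - q = 0 := by
    apply Polynomial.eq_zero_of_infinite_isRoot
    apply Set.infinite_of_injective_forall_mem
      (f := fun k : ℕ => ((k + 1 : ℕ) : ℚ))
    · intro a b hab
      simpa using hab
    · intro a
      simp only [Set.mem_setOf_eq, IsRoot, eval_sub, sub_eq_zero]
      exact h (a + 1) (by omega)
  exact sub_eq_zero.mp hz

lemma gauss1 (n : ℕ) : ∑ i ∈ Finset.Icc 1 n, (i : ℚ) = ((n : ℚ) ^ 2 + n) / 2 := by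
  induction n with
  | zero => simp
  | succ n ih =>
    rw [Finset.sum_Icc_succ_top (by omega), ih]
    push_cast; ring

lemma gauss2 (n : ℕ) :
    ∑ i ∈ Finset.Icc 1 n, (i : ℚ) ^ 2 = (2 * (n : ℚ) ^ 3 + 3 * n ^ 2 + n) / 6 := by
  induction n with
  | zero => simp
  | succ n ih =>
    rw [Finset.sum_Icc_succ_top (by omega), ih]
    push_cast; ring

noncomputable def Fp (k : ℕ) : ℚ[X] :=
  C ((k + 1 : ℚ)⁻¹) *
    ((Polynomial.bernoulli (k + 1)).comp (X + 1) - C (_root_.bernoulli (k + 1)))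

lemma Fp_eval (k n : ℕ) (hk : 1 ≤ k) :
    (Fp k).eval (n : ℚ) = ∑ i ∈ Finset.Icc 1 n, (i : ℚ) ^ k := by
  have h := Polynomial.sum_range_pow_eq_bernoulli_sub (n + 1) k
  have hsum : ∑ i ∈ Finset.range (n + 1), (i : ℚ) ^ k
      = ∑ i ∈ Finset.Icc 1 n, (i : ℚ) ^ k := by
    rw [show Finset.range (n + 1) = insert 0 (Finset.Icc 1 n) from by
      ext x; simp; omega, Finset.sum_insert (by simp)]
    rw [Nat.cast_zero, zero_pow (by omega : k ≠ 0), zero_add]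
  rw [hsum] at h
  have hne : (k + 1 : ℚ) ≠ 0 := by positivity
  simp only [Fp, eval_mul, eval_C, eval_sub, eval_comp, eval_add, eval_X, eval_one]
  rw [Nat.succ_eq_add_one] at h
  push_cast at h ⊢
  rw [← h]
  field_simp

end FaulhaberAux

namespace FaulhaberAux
open Polynomial

lemma bern_odd_zero (m : ℕ) (hm : 1 ≤ m) : _root_.bernoulli (2 * m + 1) = 0 := by
  rw [_root_.bernoulli, bernoulli'_eq_zero_of_odd ⟨m, by ring⟩ (by omega), mul_zero]

lemma Fp_deriv_odd (m : ℕ) (hm : 1 ≤ m) :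
    derivative (Fp (2 * m + 1)) = ((2 * m + 1 : ℕ) : ℚ[X]) * Fp (2 * m) := by
  rw [← C_eq_natCast]
  unfold Fp
  rw [derivative_C_mul, derivative_sub, derivative_C, sub_zero, derivative_comp,
    derivative_add, derivative_X, derivative_one, add_zero,
    show (2 * m + 1 + 1) = (2 * m + 1) + 1 from rfl,
    Polynomial.derivative_bernoulli_add_one, bern_odd_zero m hm, map_zero, sub_zero]
  rw [one_mul, mul_comp, add_comp, natCast_comp, one_comp]
  rw [← mul_assoc, ← mul_assoc]
  congr 1
  rw [← C_1, ← C_eq_natCast (2*m+1), ← C_add, ← C_mul, ← C_mul]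
  congr 1
  push_cast
  have h1 : ((2 * m : ℚ) + 1 + 1 + 1) ≠ 0 := by positivity
  have h2 : ((2 * m : ℚ) + 1) ≠ 0 := by positivity
  field_simp

end FaulhaberAux

namespace FaulhaberAux
open Polynomial

noncomputable def U : ℚ[X] := C (2⁻¹ : ℚ) * (X ^ 2 + X)

lemma U_deriv : derivative U = C (2⁻¹ : ℚ) * (2 * X + 1) := by
  unfold U
  rw [derivative_C_mul, derivative_add, derivative_X, derivative_X_pow]
  norm_num
  rw [map_ofNat]

lemma U_eval (n : ℕ) : U.eval (n : ℚ) = ∑ i ∈ Finset.Icc 1 n, (i : ℚ) := by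
  rw [gauss1]
  simp [U]
  ring

lemma U_deriv_eval (x : ℚ) : (derivative U).eval x = x + 2⁻¹ := by
  rw [U_deriv]; simp; ring

lemma U_ne_zero : U ≠ 0 := by
  intro h
  have := congrArg (eval (1 : ℚ)) h
  simp [U] at this

lemma U_deriv_ne_zero : derivative U ≠ 0 := by
  intro h
  have := congrArg (eval (0 : ℚ)) h
  rw [U_deriv_eval] at this
  norm_num at this

lemma U_not_const : U ≠ C (U.coeff 0) := by
  intro h
  have h1 := congrArg (eval (1 : ℚ)) h
  have h2 := congrArg (eval (2 : ℚ)) h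
  simp only [eval_C, U, eval_mul, eval_add, eval_pow, eval_X] at h1 h2
  rw [← h1] at h2
  norm_num at h2

lemma Fp2_eq : (3 : ℚ[X]) * Fp 2 = 2 * U * derivative U := by
  apply poly_ext
  intro n hn
  simp only [eval_mul, eval_ofNat]
  rw [Fp_eval 2 n (by omega), gauss2, U_eval, gauss1, U_deriv_eval]
  ring

end FaulhaberAux

open Polynomial FaulhaberAux in
theorem faulhaber_coeff_relation (m : ℕ) (hm : 1 ≤ m) (b c : ℕ → ℚ)
    (hb : ∀ n : ℕ, 1 ≤ n →
      (∑ i ∈ Finset.Icc 1 n, (i : ℚ) ^ (2 * m)) =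
        (∑ i ∈ Finset.Icc 1 n, (i : ℚ) ^ 2) *
          ∑ j ∈ Finset.range m, b j * (∑ i ∈ Finset.Icc 1 n, (i : ℚ)) ^ j)
    (hc : ∀ n : ℕ, 1 ≤ n →
      (∑ i ∈ Finset.Icc 1 n, (i : ℚ) ^ (2 * m + 1)) =
        (∑ i ∈ Finset.Icc 1 n, (i : ℚ)) ^ 2 *
          ∑ j ∈ Finset.range m, c j * (∑ i ∈ Finset.Icc 1 n, (i : ℚ)) ^ j) :
    ∀ j : ℕ, j ≤ m - 1 → c j = ((4 * m + 2 : ℚ) / (3 * j + 6)) * b j := by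
  intro j hj
  have hjm : j < m := by omega
  set P : ℚ[X] := ∑ k ∈ Finset.range m, C (b k) * X ^ k with hPdef
  set Q : ℚ[X] := ∑ k ∈ Finset.range m, C (c k) * X ^ k with hQdef
  have h1 : Fp (2 * m) = Fp 2 * P.comp U := by
    apply poly_ext
    intro n hn
    rw [eval_mul, Fp_eval _ n (by omega), Fp_eval 2 n (by omega), hb n hn, eval_comp,
      U_eval]
    congr 1
    simp [hPdef, eval_finset_sum]
  have h2 : Fp (2 * m + 1) = U ^ 2 * Q.comp U := by
    apply poly_ext
    intro n hn
    rw [eval_mul, Fp_eval _ n (by omega), hc n hn, eval_pow, eval_comp, U_eval]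
    congr 1
    simp [hQdef, eval_finset_sum]
  have h3 := Fp_deriv_odd m hm
  rw [h2, h1] at h3
  rw [derivative_mul, derivative_pow, derivative_comp] at h3
  simp only [Nat.cast_add, Nat.cast_mul, Nat.cast_ofNat, Nat.cast_one, map_ofNat] at h3
  have h5 : (U * derivative U) *
      (((4 * (m : ℚ[X]) + 2) * P - (6 * Q + 3 * (X * derivative Q))).comp U) = 0 := by
    simp only [sub_comp, add_comp, mul_comp, natCast_comp, ofNat_comp, X_comp]
    linear_combination (-3 : ℚ[X]) * h3 - ((2 * (m : ℚ[X]) + 1) * P.comp U) * Fp2_eq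
  have h6 : (4 * (m : ℚ[X]) + 2) * P - (6 * Q + 3 * (X * derivative Q)) = 0 := by
    rcases mul_eq_zero.mp h5 with h | h
    · exact absurd h (mul_ne_zero U_ne_zero U_deriv_ne_zero)
    · rcases comp_eq_zero_iff.mp h with h' | h'
      · exact h'
      · exact absurd h'.2 U_not_const
  have hPc : P.coeff j = b j := by
    simp only [hPdef, finset_sum_coeff, coeff_C_mul, coeff_X_pow, mul_ite, mul_one,
      mul_zero, Finset.sum_ite_eq, Finset.mem_range]
    simp [hjm]
  have hQc : Q.coeff j = c j := by
    simp only [hQdef, finset_sum_coeff, coeff_C_mul, coeff_X_pow, mul_ite, mul_one,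
      mul_zero, Finset.sum_ite_eq, Finset.mem_range]
    simp [hjm]
  have hXQ : (X * derivative Q).coeff j = (j : ℚ) * c j := by
    cases j with
    | zero => simp
    | succ k =>
      rw [coeff_X_mul, coeff_derivative, hQc]
      push_cast
      ring
  have e1 : (4 * (m : ℚ[X]) + 2) = C (4 * (m : ℚ) + 2) := by
    simp [map_add, map_mul, map_ofNat, C_eq_natCast]
  have e2 : (6 : ℚ[X]) = C (6 : ℚ) := by simp [map_ofNat]
  have e3 : (3 : ℚ[X]) = C (3 : ℚ) := by simp [map_ofNat]
  rw [e1, e2, e3] at h6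
  have h7 := congrArg (fun p : ℚ[X] => p.coeff j) h6
  simp only [coeff_sub, coeff_add, coeff_zero, coeff_C_mul, hPc, hQc, hXQ] at h7
  have hden : (3 * (j : ℚ) + 6) ≠ 0 := by positivity
  rw [div_mul_eq_mul_div, eq_div_iff hden]
  linear_combination -h7
end

section
/- For every integer m ≥ 1, in the Faulhaber expansion S_{2m} = S_2 Σ_{j=0}^{m-1} b_{m,j} S_1^j (valid for all n ≥ 1), the constant coefficient satisfies b_{m,0} = 6 B_{2m}, where B_{2m} is the Bernoulli number. -/
open Finset

noncomputable def Ppoly (p : ℕ) : Polynomial ℚ :=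
  ∑ i ∈ range (p + 1), Polynomial.C (bernoulli i * ((p + 1).choose i) / (p + 1)) *
    (Polynomial.X + 1) ^ (p + 1 - i)

lemma Ppoly_eval (p n : ℕ) :
    (Ppoly p).eval (n : ℚ) = ∑ k ∈ range (n + 1), (k : ℚ) ^ p := by
  rw [sum_range_pow]
  unfold Ppoly
  rw [Polynomial.eval_finset_sum]
  refine Finset.sum_congr rfl fun i hi => ?_
  simp only [Polynomial.eval_mul, Polynomial.eval_C, Polynomial.eval_pow, Polynomial.eval_add,
    Polynomial.eval_X, Polynomial.eval_one]
  push_cast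
  ring

lemma Ppoly_eval_Icc (p : ℕ) (hp : 1 ≤ p) (n : ℕ) :
    (Ppoly p).eval (n : ℚ) = ∑ i ∈ Finset.Icc 1 n, (i : ℚ) ^ p := by
  rw [Ppoly_eval, Finset.sum_range_succ']
  rw [← Finset.Ico_add_one_right_eq_Icc, Finset.sum_Ico_eq_sum_range]
  simp only [Nat.cast_zero, zero_pow (by omega : p ≠ 0), add_zero, Nat.add_sub_cancel]
  refine Finset.sum_congr rfl fun i _ => ?_
  rw [add_comm]

lemma Ppoly_coeff_zero (p : ℕ) (hp : 1 ≤ p) : (Ppoly p).coeff 0 = 0 := by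
  rw [Polynomial.coeff_zero_eq_eval_zero]
  have h := Ppoly_eval p 0
  simpa [zero_pow (by omega : p ≠ 0)] using h

lemma Ppoly_coeff_one (p : ℕ) (hp : 2 ≤ p) : (Ppoly p).coeff 1 = bernoulli p := by
  unfold Ppoly
  rw [Polynomial.finset_sum_coeff]
  have key : ∀ i ∈ range (p + 1),
      (Polynomial.C (bernoulli i * ((p + 1).choose i) / (p + 1)) *
        (Polynomial.X + 1) ^ (p + 1 - i)).coeff 1
        = bernoulli i * (p.choose i : ℚ) := by
    intro i hi
    rw [Polynomial.coeff_C_mul, Polynomial.coeff_X_add_one_pow, Nat.choose_one_right]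
    have h := Nat.choose_mul_succ_eq p i
    have hc : ((p.choose i : ℚ)) * ((p : ℚ) + 1)
        = ((p + 1).choose i : ℚ) * ((p + 1 - i : ℕ) : ℚ) := by
      exact_mod_cast congrArg (fun x : ℕ => (x : ℚ)) h
    have hq : ((p : ℚ) + 1) ≠ 0 := by positivity
    field_simp
    linear_combination (-1 : ℚ) * bernoulli i * hc
  rw [Finset.sum_congr rfl key, Finset.sum_range_succ]
  have h0 : ∑ i ∈ range p, bernoulli i * (p.choose i : ℚ) = 0 := by
    have hs := sum_bernoulli p
    rw [if_neg (by omega : p ≠ 1)] at hs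
    rw [← hs]
    exact Finset.sum_congr rfl fun i _ => mul_comm _ _
  rw [h0, Nat.choose_self]
  simp

theorem faulhaber_even_constant_coeff (m : ℕ) (hm : 1 ≤ m) (b : ℕ → ℚ)
    (hb : ∀ n : ℕ, 1 ≤ n →
      (∑ i ∈ Finset.Icc 1 n, (i : ℚ) ^ (2 * m)) =
        (∑ i ∈ Finset.Icc 1 n, (i : ℚ) ^ 2) *
          ∑ j ∈ Finset.range m, b j * (∑ i ∈ Finset.Icc 1 n, (i : ℚ)) ^ j) :
    b 0 = 6 * bernoulli (2 * m) := by
  set Q : Polynomial ℚ := ∑ j ∈ range m, Polynomial.C (b j) * (Ppoly 1) ^ j with hQdef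
  have hpoly : Ppoly (2 * m) = Ppoly 2 * Q := by
    apply Polynomial.eq_of_infinite_eval_eq
    apply Set.Infinite.mono (s := Set.range fun n : ℕ => ((n + 1 : ℕ) : ℚ))
    · rintro x ⟨n, rfl⟩
      have h1 : (1 : ℕ) ≤ n + 1 := by omega
      simp only [Set.mem_setOf_eq]
      rw [Ppoly_eval_Icc (2 * m) (by omega), Polynomial.eval_mul, Ppoly_eval_Icc 2 (by omega),
        hQdef, Polynomial.eval_finset_sum]
      rw [hb (n + 1) h1]
      congr 1
      refine Finset.sum_congr rfl fun j _ => ?_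
      rw [Polynomial.eval_mul, Polynomial.eval_C, Polynomial.eval_pow, Ppoly_eval_Icc 1 le_rfl]
      simp
    · apply Set.infinite_range_of_injective
      intro a b hab
      simpa using hab
  have h1 : (Ppoly (2 * m)).coeff 1 = bernoulli (2 * m) := Ppoly_coeff_one _ (by omega)
  have hP20 : (Ppoly 2).coeff 0 = 0 := Ppoly_coeff_zero 2 (by omega)
  have hP21 : (Ppoly 2).coeff 1 = 1 / 6 := by
    rw [Ppoly_coeff_one 2 le_rfl, bernoulli_eq_bernoulli'_of_ne_one (by omega), bernoulli'_two]
  have hQ0 : Q.coeff 0 = b 0 := by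
    rw [Polynomial.coeff_zero_eq_eval_zero, hQdef, Polynomial.eval_finset_sum]
    have hP10 : (Ppoly 1).eval 0 = 0 := by
      have h := Ppoly_eval 1 0
      simpa using h
    rw [Finset.sum_eq_single 0]
    · simp [hP10]
    · intro j hj hj0
      simp [hP10, zero_pow hj0]
    · intro h
      exact absurd (Finset.mem_range.mpr (by omega)) h
  have h2 : (Ppoly 2 * Q).coeff 1 = (1 / 6) * b 0 := by
    rw [Polynomial.coeff_mul]
    rw [show (Finset.HasAntidiagonal.antidiagonal 1 : Finset (ℕ × ℕ)) = {(0, 1), (1, 0)} from rfl]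
    rw [Finset.sum_insert (by decide), Finset.sum_singleton]
    rw [hP20, hP21, hQ0]
    ring
  rw [hpoly, h2] at h1
  linarith
end

section
/- For every integer m ≥ 1, in the Faulhaber expansion S_{2m+1} = S_1^2 Σ_{j=0}^{m-1} c_{m,j} S_1^j (valid for all n ≥ 1), the constant coefficient satisfies c_{m,0} = (4m+2) B_{2m}. -/
section
open Polynomial Finset

private theorem faulhaber_aux_s18 (m : ℕ) (hm : 1 ≤ m) (c : ℕ → ℚ)
    (hc : ∀ n : ℕ, 1 ≤ n →
      (∑ i ∈ Finset.Icc 1 n, (i : ℚ) ^ (2 * m + 1)) =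
        (∑ i ∈ Finset.Icc 1 n, (i : ℚ)) ^ 2 *
          ∑ j ∈ Finset.range m, c j * (∑ i ∈ Finset.Icc 1 n, (i : ℚ)) ^ j) :
    c 0 = (4 * m + 2 : ℚ) * _root_.bernoulli (2 * m) := by
  set p := 2 * m + 1 with hp
  -- the Gauss polynomial
  set S : ℚ[X] := Polynomial.C (1/2 : ℚ) * (X ^ 2 + X) with hS
  have hSeval : ∀ n : ℕ, S.eval (n : ℚ) = ∑ i ∈ Finset.Icc 1 n, (i : ℚ) := by
    intro n
    induction n with
    | zero => simp [hS]
    | succ k ih =>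
      rw [Finset.sum_Icc_succ_top (by omega), ← ih]
      simp [hS]; ring
  set L : ℚ[X] := ∑ i ∈ Finset.range (p + 1),
      Polynomial.C (bernoulli' i * ((p + 1).choose i) / (p + 1)) * X ^ (p + 1 - i) with hL
  have hLeval : ∀ n : ℕ, L.eval (n : ℚ) = ∑ i ∈ Finset.Icc 1 n, (i : ℚ) ^ p := by
    intro n
    have h := sum_Ico_pow n p
    rw [hL]
    simp only [eval_finset_sum, eval_mul, eval_C, eval_pow, eval_X]
    rw [show Finset.Icc 1 n = Finset.Ico 1 (n+1) by rfl, h]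
    apply Finset.sum_congr rfl; intro i _; ring
  set T : ℚ[X] := ∑ j ∈ Finset.range m, Polynomial.C (c j) * S ^ j with hT
  set R : ℚ[X] := S ^ 2 * T with hR
  have hLR : L = R := by
    apply Polynomial.eq_of_infinite_eval_eq
    apply Set.Infinite.mono (s := (fun n : ℕ => (n : ℚ)) '' {n | 1 ≤ n})
    · rintro x ⟨n, hn, rfl⟩
      simp only [Set.mem_setOf_eq]
      rw [hLeval, hR, eval_mul, eval_pow, hSeval, hT]
      simp only [eval_finset_sum, eval_mul, eval_C, eval_pow]
      rw [hc n hn]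
      congr 1
      apply Finset.sum_congr rfl; intro j _; rw [hSeval]
    · apply Set.Infinite.image
      · exact fun a _ b _ h => Nat.cast_injective h
      · exact Set.infinite_of_not_bddAbove (by
          intro ⟨b, hb⟩
          exact absurd (hb (by simp : (b+1 : ℕ) ∈ {n | 1 ≤ n})) (by omega))
  -- compare coefficient 2
  have hcoeffL : L.coeff 2 = bernoulli' (2 * m) * ((p + 1).choose (2 * m)) / (p + 1) := by
    rw [hL, Polynomial.finset_sum_coeff]
    rw [Finset.sum_eq_single (2 * m)]
    · rw [coeff_C_mul, coeff_X_pow, if_pos (by omega)]; ring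
    · intro i hi hne
      rw [coeff_C_mul, coeff_X_pow, if_neg (by simp at hi; omega)]; ring
    · intro h; exact absurd (Finset.mem_range.mpr (by omega)) h
  have hS2 : S ^ 2 = Polynomial.C (1/4 : ℚ) * (X ^ 2 * (X + 1) ^ 2) := by
    have h12 : (Polynomial.C (1/2:ℚ))^2 = Polynomial.C (1/4:ℚ) := by
      rw [← C_pow]; norm_num
    rw [hS, ← h12]; ring
  have hcoeffR : R.coeff 2 = (1/4 : ℚ) * c 0 := by
    rw [hR, hS2, mul_assoc, mul_assoc, coeff_C_mul,
      show (2 : ℕ) = 0 + 2 by rfl, coeff_X_pow_mul,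
      Polynomial.coeff_zero_eq_eval_zero]
    rw [eval_mul, hT]
    simp only [eval_finset_sum, eval_mul, eval_C, eval_pow]
    have h0 : S.eval 0 = 0 := by simp [hS]
    rw [Finset.sum_eq_single 0]
    · simp [h0]
    · intro j hj hne; rw [h0, zero_pow hne, mul_zero]
    · intro h; exact absurd (Finset.mem_range.mpr (by omega)) h
  have key : bernoulli' (2 * m) * ((p + 1).choose (2 * m)) / (p + 1) = (1/4 : ℚ) * c 0 := by
    rw [← hcoeffL, ← hcoeffR, hLR]
  have hpc : (p : ℚ) = 2 * (m:ℚ) + 1 := by rw [hp]; push_cast; ring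
  have hchoose : ((p + 1).choose (2 * m) : ℚ) = ((p:ℚ) + 1) * p / 2 := by
    have h1 : (2*m+2).choose (2*m) = (2*m+2).choose 2 := by
      have := Nat.choose_symm (n := 2*m+2) (k := 2) (by omega)
      simpa using this
    rw [hp, show 2*m+1+1 = 2*m+2 from rfl, h1, Nat.cast_choose_two]
    push_cast; ring
  have hb : (bernoulli (2 * m) : ℚ) = bernoulli' (2 * m) :=
    bernoulli_eq_bernoulli'_of_ne_one (by omega)
  rw [hchoose, hpc] at key
  have hne : (2*(m:ℚ)+1) + 1 ≠ 0 := by positivity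
  rw [hb]
  field_simp at key
  have hne2 : (2 * (2*(m:ℚ)+1+1)) ≠ 0 := by positivity
  have goal2 : c 0 * (2*(2*(m:ℚ)+1+1)) = (4*m+2) * bernoulli' (2*m) * (2*(2*(m:ℚ)+1+1)) := by
    linear_combination (-(2*(m:ℚ)+2)) * key
  exact mul_right_cancel₀ hne2 goal2

end

theorem faulhaber_odd_constant_coeff (m : ℕ) (hm : 1 ≤ m) (c : ℕ → ℚ)
    (hc : ∀ n : ℕ, 1 ≤ n →
      (∑ i ∈ Finset.Icc 1 n, (i : ℚ) ^ (2 * m + 1)) =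
        (∑ i ∈ Finset.Icc 1 n, (i : ℚ)) ^ 2 *
          ∑ j ∈ Finset.range m, c j * (∑ i ∈ Finset.Icc 1 n, (i : ℚ)) ^ j) :
    c 0 = (4 * m + 2 : ℚ) * bernoulli (2 * m) :=
  faulhaber_aux_s18 m hm c hc
end
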